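/- Let a, p, q, b : ℤ with a ≤ p ≤ q ≤ b. Let n : ℤ → ℝ and set d = (Σ_{l ∈ Finset.Icc p q} n l) / (q - p + 1). Define m : ℤ → ℝ by m l = d for l ∈ Finset.Icc p q and m l = n l otherwise. Suppose: (i) m l ≤ m (l+1) for every l ∈ Finset.Icc a (b-1); and (ii) Σ_{i ∈ Finset.Icc p l} (n i - d) ≥ 0 for every l ∈ Finset.Icc p (q-1). Then for every m' : ℤ → ℝ with m' l ≤ m' (l+1) for all l ∈ Finset.Icc a (b-1), Σ_{l ∈ Finset.Icc a b} (m l - n l)^2 ≤ Σ_{l ∈ Finset.Icc a b} (m' l - n l)^2. -/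

import Mathlib

lemma sum_icc_top (p q : ℤ) (h : p ≤ q + 1) (f : ℤ → ℝ) :
    ∑ l ∈ Finset.Icc p (q+1), f l = (∑ l ∈ Finset.Icc p q, f l) + f (q+1) := by
  have he : Finset.Icc p (q+1) = insert (q+1) (Finset.Icc p q) := by
    ext z; simp only [Finset.mem_Icc, Finset.mem_insert]; omega
  rw [he, Finset.sum_insert (by simp only [Finset.mem_Icc]; omega)]
  ring

lemma abel_icc (p : ℤ) (c x : ℤ → ℝ) : ∀ q, p ≤ q →
    ∑ l ∈ Finset.Icc p q, c l * x l =
      (∑ l ∈ Finset.Icc p (q-1), (∑ i ∈ Finset.Icc p l, c i) * (x l - x (l+1)))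
        + (∑ i ∈ Finset.Icc p q, c i) * x q := by
  refine Int.le_induction ?_ ?_
  · rw [Finset.Icc_self, Finset.Icc_eq_empty (by omega : ¬ p ≤ p - 1)]
    simp
  · intro q hq ih
    have h1 : p ≤ q + 1 := by omega
    have hmid := sum_icc_top p (q-1) (by omega)
      (fun l => (∑ i ∈ Finset.Icc p l, c i) * (x l - x (l+1)))
    rw [show q - 1 + 1 = q by ring] at hmid
    rw [sum_icc_top p q h1, ih, show q + 1 - 1 = q by ring, hmid, sum_icc_top p q h1]
    ring

theorem stmt_12 (a p q b : ℤ) (hap : a ≤ p) (hpq : p ≤ q) (hqb : q ≤ b)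
    (n : ℤ → ℝ) (d : ℝ)
    (hd : d = (∑ l ∈ Finset.Icc p q, n l) / ((q - p + 1 : ℤ) : ℝ))
    (m : ℤ → ℝ)
    (hm : ∀ l : ℤ, m l = if l ∈ Finset.Icc p q then d else n l)
    (hfeas : ∀ l ∈ Finset.Icc a (b - 1), m l ≤ m (l + 1))
    (hmult : ∀ l ∈ Finset.Icc p (q - 1), 0 ≤ ∑ i ∈ Finset.Icc p l, (n i - d)) :
    ∀ m' : ℤ → ℝ, (∀ l ∈ Finset.Icc a (b - 1), m' l ≤ m' (l + 1)) →
      ∑ l ∈ Finset.Icc a b, (m l - n l) ^ 2 ≤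
        ∑ l ∈ Finset.Icc a b, (m' l - n l) ^ 2 := by
  intro m' hm'
  -- the block sum of n minus d vanishes
  have hcard : (Finset.Icc p q).card = (q - p + 1).toNat := by
    rw [Int.card_Icc]; omega
  have hne : ((q - p + 1 : ℤ) : ℝ) ≠ 0 := by
    have : (0:ℤ) < q - p + 1 := by omega
    exact_mod_cast this.ne'
  have hSq : ∑ i ∈ Finset.Icc p q, (n i - d) = 0 := by
    have hc : ((q - p + 1).toNat : ℝ) = ((q - p + 1 : ℤ) : ℝ) := by
      norm_cast; omega
    rw [Finset.sum_sub_distrib, Finset.sum_const, hcard, nsmul_eq_mul, hc, hd]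
    push_cast at hne ⊢
    field_simp
    ring
  -- inner product nonneg
  have hsub : Finset.Icc p q ⊆ Finset.Icc a b := Finset.Icc_subset_Icc hap hqb
  have hip : 0 ≤ ∑ l ∈ Finset.Icc a b, (m l - n l) * (m' l - m l) := by
    have h1 : ∑ l ∈ Finset.Icc a b, (m l - n l) * (m' l - m l)
        = ∑ l ∈ Finset.Icc p q, (m l - n l) * (m' l - m l) := by
      refine (Finset.sum_subset hsub ?_).symm
      intro l _ hl
      rw [hm l, if_neg hl]; ring
    have h2 : ∑ l ∈ Finset.Icc p q, (m l - n l) * (m' l - m l)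
        = -∑ l ∈ Finset.Icc p q, (n l - d) * (m' l - d) := by
      rw [← Finset.sum_neg_distrib]
      refine Finset.sum_congr rfl ?_
      intro l hl
      rw [hm l, if_pos hl]; ring
    have habel := abel_icc p (fun i => n i - d) (fun i => m' i - d) q hpq
    have h3 : ∑ l ∈ Finset.Icc p q, (n l - d) * (m' l - d) ≤ 0 := by
      rw [habel, hSq, zero_mul, add_zero]
      apply Finset.sum_nonpos
      intro l hl
      simp only [Finset.mem_Icc] at hl
      have hS := hmult l (by simp only [Finset.mem_Icc]; omega)
      have hmono := hm' l (by simp only [Finset.mem_Icc]; omega)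
      have : (m' l - d) - (m' (l+1) - d) ≤ 0 := by linarith
      exact mul_nonpos_of_nonneg_of_nonpos hS this
    rw [h1, h2]
    linarith
  -- conclude
  have key : ∑ l ∈ Finset.Icc a b, (m' l - n l) ^ 2
      = ∑ l ∈ Finset.Icc a b, (m l - n l) ^ 2
        + 2 * ∑ l ∈ Finset.Icc a b, (m l - n l) * (m' l - m l)
        + ∑ l ∈ Finset.Icc a b, (m' l - m l) ^ 2 := by
    rw [Finset.mul_sum, ← Finset.sum_add_distrib, ← Finset.sum_add_distrib]
    refine Finset.sum_congr rfl ?_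
    intro l _
    ring
  have hsq : 0 ≤ ∑ l ∈ Finset.Icc a b, (m' l - m l) ^ 2 :=
    Finset.sum_nonneg fun l _ => sq_nonneg _
  linarith
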